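/- arXiv:0910.1258 — 2 statements merged into one kernel-verified Lean document; each statement's English description precedes it below -/
import Mathlib

section
/- For any natural numbers a, b, c, d, the integral ∫_{O_2} u_{11}^a u_{12}^b u_{21}^c u_{22}^d du over the orthogonal group O_2 equals ε · (a+d)!! (b+c)!! / (a+b+c+d+1)!!, where ε = 1 if a, b, c, d are all even, ε = −1 if a, b, c, d are all odd, and ε = 0 otherwise. -/
open MeasureTheory Matrix

noncomputable section

/-- The double factorial convention of the paper: `m!! = (m-1)(m-3)(m-5)⋯`,
the product ending at `1` or `2` (empty product being `1`), i.e. the standard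
double factorial of `m - 1`. -/
def df (m : ℕ) : ℕ := Nat.doubleFactorial (m - 1)

/-- The Borel σ-algebra on the orthogonal group `O_n`. -/
instance (n : ℕ) : MeasurableSpace (Matrix.orthogonalGroup (Fin n) ℝ) := borel _

instance (n : ℕ) : BorelSpace (Matrix.orthogonalGroup (Fin n) ℝ) := ⟨rfl⟩

/-- The `(i,j)` entry of an orthogonal matrix (out-of-range indices give `0`;
in all statements below the indices are in range). -/
def entry {n : ℕ} (u : Matrix.orthogonalGroup (Fin n) ℝ) (i j : ℕ) : ℝ :=
  if h : i < n ∧ j < n then (u : Matrix (Fin n) (Fin n) ℝ) ⟨i, h.1⟩ ⟨j, h.2⟩ else 0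

/-- The rectangular integral `I_n(a) = ∫_{O_n} ∏_{i,j} u_{ij}^{a_{ij}} du`. -/
def In (n : ℕ) {p q : ℕ} (μ : Measure (Matrix.orthogonalGroup (Fin n) ℝ))
    (a : Matrix (Fin p) (Fin q) ℕ) : ℝ :=
  ∫ u, ∏ i : Fin p, ∏ j : Fin q, entry u i j ^ a i j ∂μ

/-- The two-row integral `I_n(a;b) = ∫_{O_n} ∏_j u_{1j}^{a_j} u_{2j}^{b_j} du`. -/
def twoRowI (n : ℕ) {q : ℕ} (μ : Measure (Matrix.orthogonalGroup (Fin n) ℝ))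
    (a b : Fin q → ℕ) : ℝ :=
  ∫ u, ∏ j : Fin q, entry u 0 j ^ a j * entry u 1 j ^ b j ∂μ

/-- The normalized two-row quantity
`Φ_n(a;b) = (Σa+n-2)!!(Σb+n-2)!! / (((n-2)!!)² ∏ a_i!! ∏ b_i!!) · I_n(a;b)`. -/
def Phi (n : ℕ) {q : ℕ} (μ : Measure (Matrix.orthogonalGroup (Fin n) ℝ))
    (a b : Fin q → ℕ) : ℝ :=
  ((df (∑ i, a i + n - 2) : ℝ) * (df (∑ i, b i + n - 2) : ℝ)) /
    ((df (n - 2) : ℝ) ^ 2 * (∏ i, (df (a i) : ℝ)) * ∏ i, (df (b i) : ℝ)) *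
    twoRowI n μ a b

/-- The pair of rows `E(r,s,t)`: top row `(1^{2r}, 2^s, 0^t)`. -/
def Etop (r s t : ℕ) : Fin (2 * r + s + t) → ℕ :=
  fun j => if (j : ℕ) < 2 * r then 1 else if (j : ℕ) < 2 * r + s then 2 else 0

/-- The pair of rows `E(r,s,t)`: bottom row `(1^{2r}, 0^s, 2^t)`. -/
def Ebot (r s t : ℕ) : Fin (2 * r + s + t) → ℕ :=
  fun j => if (j : ℕ) < 2 * r then 1 else if (j : ℕ) < 2 * r + s then 0 else 2

/-! ### Auxiliary material for Statement 1 -/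

namespace O2aux

open Real intervalIntegral

/-! #### Trigonometric moment integrals -/

def W (m n : ℕ) : ℝ := ∫ x in (0:ℝ)..(2*π), cos x ^ m * sin x ^ n

lemma W_cos_odd (m n : ℕ) : W (2*m+1) n = 0 := by
  have h : W (2*m+1) n = ∫ x in (0:ℝ)..(2*π), sin x ^ n * cos x ^ (2*m+1) := by
    unfold W; congr 1; ext x; ring
  rw [h, integral_sin_pow_mul_cos_pow_odd, Real.sin_two_pi, Real.sin_zero,
    intervalIntegral.integral_same]

lemma W_sin_odd (m n : ℕ) : W m (2*n+1) = 0 := by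
  have h : W m (2*n+1) = ∫ x in (0:ℝ)..(2*π), sin x ^ (2*n+1) * cos x ^ m := by
    unfold W; congr 1; ext x; ring
  rw [h, integral_sin_pow_odd_mul_cos_pow, Real.cos_two_pi, Real.cos_zero,
    intervalIntegral.integral_same]

lemma W_rec_cos (m n : ℕ) : ((m:ℝ) + n + 2) * W (m+2) n = (m+1) * W m n := by
  have hu : ∀ x ∈ Set.uIcc (0:ℝ) (2*π), HasDerivAt (fun y => cos y ^ (m+1))
      (-((m:ℝ)+1) * sin x * cos x ^ m) x := by
    intro x _
    simpa only [Nat.cast_add, Nat.cast_one, mul_right_comm, neg_mul, mul_neg,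
      Nat.add_sub_cancel] using (Real.hasDerivAt_cos x).fun_pow (m+1)
  have hv : ∀ x ∈ Set.uIcc (0:ℝ) (2*π), HasDerivAt (fun y => sin y ^ (n+1))
      (((n:ℝ)+1) * cos x * sin x ^ n) x := by
    intro x _
    simpa only [Nat.cast_add, Nat.cast_one, mul_right_comm,
      Nat.add_sub_cancel] using (Real.hasDerivAt_sin x).fun_pow (n+1)
  have hu' : IntervalIntegrable (fun x => -((m:ℝ)+1) * sin x * cos x ^ m) volume 0 (2*π) := by
    apply Continuous.intervalIntegrable; fun_prop
  have hv' : IntervalIntegrable (fun x => ((n:ℝ)+1) * cos x * sin x ^ n) volume 0 (2*π) := by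
    apply Continuous.intervalIntegrable; fun_prop
  have H := intervalIntegral.integral_mul_deriv_eq_deriv_mul hu hv hu' hv'
  have e1 : (∫ x in (0:ℝ)..(2*π), cos x ^ (m+1) * (((n:ℝ)+1) * cos x * sin x ^ n))
      = ((n:ℝ)+1) * W (m+2) n := by
    unfold W; rw [← intervalIntegral.integral_const_mul]; congr 1; ext x; ring
  have e2 : (∫ x in (0:ℝ)..(2*π), -((m:ℝ)+1) * sin x * cos x ^ m * sin x ^ (n+1))
      = -((m:ℝ)+1) * (W m n - W (m+2) n) := by
    have : ∀ x : ℝ, -((m:ℝ)+1) * sin x * cos x ^ m * sin x ^ (n+1)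
        = -((m:ℝ)+1) * (cos x ^ m * sin x ^ n - cos x ^ (m+2) * sin x ^ n) := by
      intro x
      have hs : sin x ^ (n+2) = sin x ^ n * (1 - cos x ^ 2) := by
        rw [← Real.sin_sq]; ring
      calc -((m:ℝ)+1) * sin x * cos x ^ m * sin x ^ (n+1)
          = -((m:ℝ)+1) * (cos x ^ m * sin x ^ (n+2)) := by ring
        _ = -((m:ℝ)+1) * (cos x ^ m * sin x ^ n - cos x ^ (m+2) * sin x ^ n) := by
            rw [hs]; ring
    rw [intervalIntegral.integral_congr (fun x _ => this x),
      intervalIntegral.integral_const_mul, intervalIntegral.integral_sub]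
    · rfl
    · apply Continuous.intervalIntegrable; fun_prop
    · apply Continuous.intervalIntegrable; fun_prop
  rw [e1, e2] at H
  simp only [Real.sin_two_pi, Real.sin_zero, Real.cos_two_pi, Real.cos_zero] at H
  have : ((n:ℝ)+1) * W (m+2) n = ((m:ℝ)+1) * (W m n - W (m+2) n) := by
    rw [H]; ring
  linarith [this]

lemma W_rec_sin (m n : ℕ) : ((m:ℝ) + n + 2) * W m (n+2) = (n+1) * W m n := by
  have key : W m (n+2) = W m n - W (m+2) n := by
    have : ∀ x : ℝ, cos x ^ m * sin x ^ (n+2)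
        = cos x ^ m * sin x ^ n - cos x ^ (m+2) * sin x ^ n := by
      intro x
      have hs : sin x ^ (n+2) = sin x ^ n * (1 - cos x ^ 2) := by
        rw [← Real.sin_sq]; ring
      rw [hs]; ring
    unfold W
    rw [intervalIntegral.integral_congr (fun x _ => this x),
      intervalIntegral.integral_sub]
    · apply Continuous.intervalIntegrable; fun_prop
    · apply Continuous.intervalIntegrable; fun_prop
  have h2 := W_rec_cos m n
  rw [key]
  have hne : ((m:ℝ) + n + 2) ≠ 0 := by positivity
  field_simp at h2 ⊢
  nlinarith [h2]

lemma W_zero_zero : W 0 0 = 2*π := by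
  simp [W]

lemma df_pos (m : ℕ) : 0 < df m := Nat.doubleFactorial_pos _

lemma df_even_succ (k : ℕ) : df (2*k+2) = (2*k+1) * df (2*k) := by
  cases k with
  | zero => simp [df, Nat.doubleFactorial]
  | succ j =>
    show Nat.doubleFactorial (2*(j+1)+2-1) = (2*(j+1)+1) * Nat.doubleFactorial (2*(j+1)-1)
    have h1 : 2*(j+1)+2-1 = (2*j+1)+2 := by omega
    have h2 : 2*(j+1)-1 = 2*j+1 := by omega
    rw [h1, h2, Nat.doubleFactorial_add_two]
    ring_nf

lemma df_odd_succ (k : ℕ) : df (2*k+3) = (2*k+2) * df (2*k+1) := by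
  show Nat.doubleFactorial (2*k+3-1) = (2*k+2) * Nat.doubleFactorial (2*k+1-1)
  have h1 : 2*k+3-1 = 2*k+2 := by omega
  have h2 : 2*k+1-1 = 2*k := by omega
  rw [h1, h2, Nat.doubleFactorial_add_two]

lemma W_even (p q : ℕ) : W (2*p) (2*q)
    = 2*π * (df (2*p) * df (2*q)) / df (2*p + 2*q + 1) := by
  induction p with
  | zero =>
    induction q with
    | zero => simp [W_zero_zero, df]
    | succ k ih =>
      have hrec := W_rec_sin 0 (2*k)
      have h2 : (2*(k+1) : ℕ) = 2*k+2 := by ring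
      rw [h2]
      have hne : ((2*k:ℝ) + 2) ≠ 0 := by positivity
      have hW : W 0 (2*k+2) = ((2*k:ℝ)+1)/((2*k:ℝ)+2) * W 0 (2*k) := by
        push_cast at hrec
        field_simp
        linarith [hrec]
      have h3 : (2*0 + (2*k+2) + 1 : ℕ) = 2*k+3 := by omega
      have h4 : (2*0 + 2*k + 1 : ℕ) = 2*k+1 := by omega
      rw [hW, ih, h3, h4, df_even_succ, df_odd_succ]
      have hd1 : (df (2*k+1) : ℝ) ≠ 0 := by exact_mod_cast (df_pos _).ne'
      push_cast
      field_simp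
  | succ k ih =>
    have hrec := W_rec_cos (2*k) (2*q)
    have h2 : (2*(k+1) : ℕ) = 2*k+2 := by ring
    rw [h2]
    have hne : ((2*k:ℝ) + (2*q) + 2) ≠ 0 := by positivity
    have hW : W (2*k+2) (2*q) = ((2*k:ℝ)+1)/((2*k:ℝ)+(2*q:ℝ)+2) * W (2*k) (2*q) := by
      push_cast at hrec
      field_simp
      linarith [hrec]
    have h3 : (2*k+2 + 2*q + 1 : ℕ) = 2*(k+q)+3 := by omega
    have h4 : (2*k + 2*q + 1 : ℕ) = 2*(k+q)+1 := by omega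
    rw [hW, ih, h3, h4, df_even_succ, df_odd_succ]
    have hd1 : (df (2*(k+q)+1) : ℝ) ≠ 0 := by exact_mod_cast (df_pos _).ne'
    push_cast
    field_simp

/-! #### The structure of `O₂` -/

abbrev G := Matrix.orthogonalGroup (Fin 2) ℝ

instance : SecondCountableTopology (Matrix (Fin 2) (Fin 2) ℝ) :=
  (inferInstance : SecondCountableTopology (Fin 2 → Fin 2 → ℝ))

instance : SecondCountableTopology G :=
  Topology.IsEmbedding.subtypeVal.secondCountableTopology

lemma mem_aux (x y : ℝ) (h : x^2 + y^2 = 1) (s : ℝ) (hs : s = 1 ∨ s = -1) :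
    !![x, -y*s; y, x*s] ∈ Matrix.orthogonalGroup (Fin 2) ℝ := by
  rw [Matrix.mem_orthogonalGroup_iff]
  rcases hs with rfl | rfl <;>
  · ext i j
    fin_cases i <;> fin_cases j <;>
      simp [Matrix.mul_apply, Fin.sum_univ_two, Matrix.one_apply, Matrix.transpose_apply] <;>
      nlinarith [h]

def rot (θ : ℝ) : G :=
  ⟨!![cos θ, -sin θ; sin θ, cos θ], by
    have := mem_aux (cos θ) (sin θ) (by rw [add_comm]; exact sin_sq_add_cos_sq θ) 1 (Or.inl rfl)
    simpa using this⟩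

def ref (θ : ℝ) : G :=
  ⟨!![cos θ, sin θ; sin θ, -cos θ], by
    have := mem_aux (cos θ) (sin θ) (by rw [add_comm]; exact sin_sq_add_cos_sq θ) (-1) (Or.inr rfl)
    simpa using this⟩

lemma coe_mul (u v : G) :
    ((u * v : G) : Matrix (Fin 2) (Fin 2) ℝ)
      = (u : Matrix (Fin 2) (Fin 2) ℝ) * v := rfl

lemma rot_mul_rot (θ α : ℝ) : rot θ * rot α = rot (θ + α) := by
  apply Subtype.ext
  rw [coe_mul]
  show !![cos θ, -sin θ; sin θ, cos θ] * !![cos α, -sin α; sin α, cos α] = _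
  rw [Matrix.mul_fin_two]
  show _ = !![cos (θ+α), -sin (θ+α); sin (θ+α), cos (θ+α)]
  rw [cos_add, sin_add]
  congr 1 <;> ring

lemma rot_mul_ref (θ α : ℝ) : rot θ * ref α = ref (θ + α) := by
  apply Subtype.ext
  rw [coe_mul]
  show !![cos θ, -sin θ; sin θ, cos θ] * !![cos α, sin α; sin α, -cos α] = _
  rw [Matrix.mul_fin_two]
  show _ = !![cos (θ+α), sin (θ+α); sin (θ+α), -cos (θ+α)]
  rw [cos_add, sin_add]
  congr 1 <;> ring

lemma decomp (u : G) : (∃ α, u = rot α) ∨ (∃ α, u = ref α) := by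
  obtain ⟨M, hM⟩ := u
  have h1 : star M * M = 1 := (Unitary.mem_iff.mp hM).1
  set x := M 0 0 with hx
  set y := M 1 0 with hy
  set b := M 0 1 with hb
  set d := M 1 1 with hd
  have e1 : x*x + y*y = 1 := by
    have := congrFun (congrFun h1 0) 0
    simpa [Matrix.mul_apply, Fin.sum_univ_two, Matrix.one_apply, Matrix.conjTranspose_apply,
      ← hx, ← hy] using this
  have e2 : b*b + d*d = 1 := by
    have := congrFun (congrFun h1 1) 1
    simpa [Matrix.mul_apply, Fin.sum_univ_two, Matrix.one_apply, Matrix.conjTranspose_apply,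
      ← hb, ← hd] using this
  have e3 : x*b + y*d = 0 := by
    have := congrFun (congrFun h1 0) 1
    simpa [Matrix.mul_apply, Fin.sum_univ_two, Matrix.one_apply, Matrix.conjTranspose_apply,
      ← hx, ← hy, ← hb, ← hd] using this
  set s := b*y - d*x with hs
  have hss : s * s = 1 := by
    have : s * s - 1 = (b*b+d*d-1)*(x*x+y*y) + (x*x+y*y-1) - (x*b+y*d)*(x*b+y*d) := by ring
    rw [e1, e2, e3] at this; linarith [this]
  have hbs : b = y * s := by
    have : b - y*s = x*(x*b+y*d) - b*(x*x+y*y-1) := by ring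
    rw [e1, e3] at this; linarith [this]
  have hds : d = -x * s := by
    have : d - (-x*s) = y*(x*b+y*d) - d*(x*x+y*y-1) := by ring
    rw [e1, e3] at this; linarith [this]
  have hxy : x^2 + y^2 = 1 := by nlinarith [e1]
  have hz : (⟨x, y⟩ : ℂ) ≠ 0 := by
    intro h0
    rw [Complex.ext_iff] at h0
    simp at h0
    rw [h0.1, h0.2] at hxy; norm_num at hxy
  have habs : ‖(⟨x, y⟩ : ℂ)‖ = 1 := by
    rw [Complex.norm_def, Complex.normSq_mk]
    rw [show x*x + y*y = 1 from by nlinarith [hxy]]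
    exact Real.sqrt_one
  have hcos : cos ((⟨x,y⟩:ℂ).arg) = x := by
    rw [Complex.cos_arg hz, habs]; simp
  have hsin : sin ((⟨x,y⟩:ℂ).arg) = y := by
    rw [Complex.sin_arg, habs]; simp
  have hM2 : M = !![x, b; y, d] := by
    rw [Matrix.eta_fin_two M]
  rcases mul_self_eq_one_iff.mp hss with h1s | h1s
  · right
    refine ⟨(⟨x,y⟩:ℂ).arg, ?_⟩
    apply Subtype.ext
    show M = !![cos _, sin _; sin _, -cos _]
    rw [hcos, hsin, hM2, hbs, hds, h1s]
    congr 1 <;> ring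
  · left
    refine ⟨(⟨x,y⟩:ℂ).arg, ?_⟩
    apply Subtype.ext
    show M = !![cos _, -sin _; sin _, cos _]
    rw [hcos, hsin, hM2, hbs, hds, h1s]
    congr 1 <;> ring

lemma det_rot (θ : ℝ) : ((rot θ : G) : Matrix (Fin 2) (Fin 2) ℝ).det = 1 := by
  show (!![cos θ, -sin θ; sin θ, cos θ]).det = 1
  rw [Matrix.det_fin_two_of]
  nlinarith [sin_sq_add_cos_sq θ]

lemma det_ref (θ : ℝ) : ((ref θ : G) : Matrix (Fin 2) (Fin 2) ℝ).det = -1 := by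
  show (!![cos θ, sin θ; sin θ, -cos θ]).det = -1
  rw [Matrix.det_fin_two_of]
  nlinarith [sin_sq_add_cos_sq θ]

lemma rot_periodic : Function.Periodic rot (2*π) := by
  intro θ
  apply Subtype.ext
  show !![cos (θ+2*π), -sin (θ+2*π); sin (θ+2*π), cos (θ+2*π)]
      = !![cos θ, -sin θ; sin θ, cos θ]
  rw [Real.cos_add_two_pi, Real.sin_add_two_pi]

lemma ref_periodic : Function.Periodic ref (2*π) := by
  intro θ
  apply Subtype.ext
  show !![cos (θ+2*π), sin (θ+2*π); sin (θ+2*π), -cos (θ+2*π)]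
      = !![cos θ, sin θ; sin θ, -cos θ]
  rw [Real.cos_add_two_pi, Real.sin_add_two_pi]

lemma entry_abs_le (v : G) (i j : Fin 2) : |(v : Matrix (Fin 2) (Fin 2) ℝ) i j| ≤ 1 := by
  obtain ⟨M, hM⟩ := v
  have h1 : star M * M = 1 := (Unitary.mem_iff.mp hM).1
  have hcol : M 0 j * M 0 j + M 1 j * M 1 j = 1 := by
    have := congrFun (congrFun h1 j) j
    simpa [Matrix.mul_apply, Fin.sum_univ_two, Matrix.one_apply,
      Matrix.conjTranspose_apply] using this
  have : M i j * M i j ≤ 1 := by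
    rcases i with ⟨iv, hiv⟩
    interval_cases iv <;> simp only [Fin.mk_zero, Fin.mk_one] <;> nlinarith [hcol]
  nlinarith [abs_nonneg (M i j), sq_abs (M i j), this]

lemma entry_eq (u : G) (i j : Fin 2) :
    entry u (i : ℕ) (j : ℕ) = (u : Matrix (Fin 2) (Fin 2) ℝ) i j := by
  fin_cases i <;> fin_cases j <;> simp [entry]

end O2aux

open O2aux Real

/-- the `n = 2` formula. -/
theorem statement1 (a b c d : ℕ)
    (μ : Measure (Matrix.orthogonalGroup (Fin 2) ℝ))
    [μ.IsHaarMeasure] [IsProbabilityMeasure μ] :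
    ∫ u, entry u 0 0 ^ a * entry u 0 1 ^ b * entry u 1 0 ^ c * entry u 1 1 ^ d ∂μ =
      (if Even a ∧ Even b ∧ Even c ∧ Even d then (1 : ℝ)
        else if Odd a ∧ Odd b ∧ Odd c ∧ Odd d then (-1 : ℝ) else 0) *
        ((df (a + d) : ℝ) * (df (b + c) : ℝ)) / (df (a + b + c + d + 1) : ℝ) := by
  classical
  set f : G → ℝ := fun u => entry u 0 0 ^ a * entry u 0 1 ^ b *
    entry u 1 0 ^ c * entry u 1 1 ^ d with hf
  have hentry : ∀ u : G, f u = (u : Matrix (Fin 2) (Fin 2) ℝ) 0 0 ^ a *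
      (u : Matrix (Fin 2) (Fin 2) ℝ) 0 1 ^ b * (u : Matrix (Fin 2) (Fin 2) ℝ) 1 0 ^ c *
      (u : Matrix (Fin 2) (Fin 2) ℝ) 1 1 ^ d := by
    intro u
    show entry u 0 0 ^ a * entry u 0 1 ^ b * entry u 1 0 ^ c * entry u 1 1 ^ d = _
    have e00 := entry_eq u 0 0
    have e01 := entry_eq u 0 1
    have e10 := entry_eq u 1 0
    have e11 := entry_eq u 1 1
    simp only [Fin.val_zero, Fin.val_one] at e00 e01 e10 e11
    rw [e00, e01, e10, e11]
  set I : ℝ := ∫ u, f u ∂μ with hI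
  -- rotation / reflection values of `f`
  have hrotf : ∀ φ : ℝ, f (rot φ) = (-1:ℝ)^b * (cos φ ^ (a+d) * sin φ ^ (b+c)) := by
    intro φ
    rw [hentry]
    show (cos φ) ^ a * (-sin φ) ^ b * (sin φ) ^ c * (cos φ) ^ d = _
    rw [neg_pow, pow_add, pow_add]
    ring
  have hreff : ∀ φ : ℝ, f (ref φ) = (-1:ℝ)^d * (cos φ ^ (a+d) * sin φ ^ (b+c)) := by
    intro φ
    rw [hentry]
    show (cos φ) ^ a * (sin φ) ^ b * (sin φ) ^ c * (-cos φ) ^ d = _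
    rw [neg_pow, pow_add, pow_add]
    ring
  -- continuity and boundedness of f
  have he : ∀ i j : Fin 2, Continuous (fun u : G => (u : Matrix (Fin 2) (Fin 2) ℝ) i j) :=
    fun i j => (continuous_apply j).comp ((continuous_apply i).comp continuous_subtype_val)
  have hfc : Continuous f := by
    have : f = fun u : G => (u : Matrix (Fin 2) (Fin 2) ℝ) 0 0 ^ a *
        (u : Matrix (Fin 2) (Fin 2) ℝ) 0 1 ^ b * (u : Matrix (Fin 2) (Fin 2) ℝ) 1 0 ^ c *
        (u : Matrix (Fin 2) (Fin 2) ℝ) 1 1 ^ d := funext hentry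
    rw [this]
    exact ((((he 0 0).pow a).mul ((he 0 1).pow b)).mul ((he 1 0).pow c)).mul ((he 1 1).pow d)
  have hbound : ∀ v : G, |f v| ≤ 1 := by
    intro v
    rw [hentry, abs_mul, abs_mul, abs_mul, abs_pow, abs_pow, abs_pow, abs_pow]
    have p1 := pow_le_one₀ (abs_nonneg _) (entry_abs_le v 0 0) (n := a)
    have p2 := pow_le_one₀ (abs_nonneg _) (entry_abs_le v 0 1) (n := b)
    have p3 := pow_le_one₀ (abs_nonneg _) (entry_abs_le v 1 0) (n := c)
    have p4 := pow_le_one₀ (abs_nonneg _) (entry_abs_le v 1 1) (n := d)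
    exact mul_le_one₀ (mul_le_one₀ (mul_le_one₀ p1 (by positivity) p2) (by positivity) p3)
      (by positivity) p4
  -- continuity of rot
  have hrotc : Continuous rot := by
    apply Continuous.subtype_mk
    apply continuous_matrix
    intro i j
    fin_cases i <;> fin_cases j <;> simp <;> fun_prop
  -- the auxiliary measure on ℝ
  set ν : Measure ℝ := volume.restrict (Set.Ioc (0:ℝ) (2*π)) with hν
  have hνuniv : ν Set.univ = ENNReal.ofReal (2*π) := by
    rw [hν, Measure.restrict_apply_univ, Real.volume_Ioc, sub_zero]
  haveI : IsFiniteMeasure ν := ⟨by rw [hνuniv]; exact ENNReal.ofReal_lt_top⟩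
  -- Step 1: left invariance
  have E1 : (∫ θ, (∫ u, f (rot θ * u) ∂μ) ∂ν) = (2*π) * I := by
    have : ∀ θ : ℝ, (∫ u, f (rot θ * u) ∂μ) = I := fun θ =>
      integral_mul_left_eq_self f (rot θ)
    rw [integral_congr_ae (Filter.Eventually.of_forall this), integral_const, measureReal_def, hνuniv,
      ENNReal.toReal_ofReal (by positivity), smul_eq_mul]
  -- Step 2: Fubini
  set F : ℝ → G → ℝ := fun θ u => f (rot θ * u) with hF
  have hFc : Continuous (Function.uncurry F) := by
    apply hfc.comp
    exact ((hrotc.comp continuous_fst).mul continuous_snd)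
  have hFint : Integrable (Function.uncurry F) (ν.prod μ) := by
    apply Integrable.mono' (integrable_const (1:ℝ)) hFc.aestronglyMeasurable
    filter_upwards with p
    exact hbound _
  have E2 : (∫ θ, (∫ u, F θ u ∂μ) ∂ν) = ∫ u, (∫ θ, F θ u ∂ν) ∂μ :=
    integral_integral_swap hFint
  -- Step 3: inner integral evaluation
  set Araw : ℝ := ∫ θ in (0:ℝ)..(2*π), f (rot θ) with hAraw
  set Braw : ℝ := ∫ θ in (0:ℝ)..(2*π), f (ref θ) with hBraw
  have hper_rot : Function.Periodic (fun θ => f (rot θ)) (2*π) := fun θ => by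
    show f (rot (θ + 2*π)) = f (rot θ)
    rw [rot_periodic θ]
  have hper_ref : Function.Periodic (fun θ => f (ref θ)) (2*π) := fun θ => by
    show f (ref (θ + 2*π)) = f (ref θ)
    rw [ref_periodic θ]
  have E3rot : ∀ α : ℝ, (∫ θ, F θ (rot α) ∂ν) = Araw := by
    intro α
    have h1 : ∀ θ : ℝ, F θ (rot α) = f (rot (θ + α)) := fun θ => by
      rw [hF]; simp only; rw [rot_mul_rot]
    calc (∫ θ, F θ (rot α) ∂ν) = ∫ θ in Set.Ioc (0:ℝ) (2*π), f (rot (θ + α)) ∂volume := by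
          rw [hν]; exact integral_congr_ae (Filter.Eventually.of_forall h1)
      _ = ∫ θ in (0:ℝ)..(2*π), f (rot (θ + α)) :=
          (intervalIntegral.integral_of_le (by positivity)).symm
      _ = ∫ θ in (0+α)..(2*π+α), f (rot θ) :=
          intervalIntegral.integral_comp_add_right (fun θ => f (rot θ)) α
      _ = ∫ θ in α..(α+2*π), f (rot θ) := by rw [zero_add, add_comm α (2*π)]
      _ = ∫ θ in (0:ℝ)..(0+2*π), f (rot θ) := hper_rot.intervalIntegral_add_eq α 0
      _ = Araw := by rw [zero_add, hAraw]
  have E3ref : ∀ α : ℝ, (∫ θ, F θ (ref α) ∂ν) = Braw := by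
    intro α
    have h1 : ∀ θ : ℝ, F θ (ref α) = f (ref (θ + α)) := fun θ => by
      rw [hF]; simp only; rw [rot_mul_ref]
    calc (∫ θ, F θ (ref α) ∂ν) = ∫ θ in Set.Ioc (0:ℝ) (2*π), f (ref (θ + α)) ∂volume := by
          rw [hν]; exact integral_congr_ae (Filter.Eventually.of_forall h1)
      _ = ∫ θ in (0:ℝ)..(2*π), f (ref (θ + α)) :=
          (intervalIntegral.integral_of_le (by positivity)).symm
      _ = ∫ θ in (0+α)..(2*π+α), f (ref θ) :=
          intervalIntegral.integral_comp_add_right (fun θ => f (ref θ)) α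
      _ = ∫ θ in α..(α+2*π), f (ref θ) := by rw [zero_add, add_comm α (2*π)]
      _ = ∫ θ in (0:ℝ)..(0+2*π), f (ref θ) := hper_ref.intervalIntegral_add_eq α 0
      _ = Braw := by rw [zero_add, hBraw]
  -- Step 4: the determinant set
  set D : Set G := {u : G | ((u : Matrix (Fin 2) (Fin 2) ℝ)).det = 1} with hD
  have hDmeas : MeasurableSet D := by
    have : Continuous (fun u : G => ((u : Matrix (Fin 2) (Fin 2) ℝ)).det) :=
      (continuous_id.matrix_det).comp continuous_subtype_val
    exact this.measurable (measurableSet_singleton 1)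
  have hDval : ∀ u : G, (∫ θ, F θ u ∂ν) = if u ∈ D then Araw else Braw := by
    intro u
    rcases decomp u with ⟨α, rfl⟩ | ⟨α, rfl⟩
    · rw [E3rot, if_pos (by simpa [hD] using det_rot α)]
    · rw [E3ref, if_neg (by norm_num [hD, det_ref α])]
  have E5 : (∫ u, (∫ θ, F θ u ∂ν) ∂μ)
      = Araw * (μ D).toReal + Braw * (μ Dᶜ).toReal := by
    have hfun : (fun u : G => (∫ θ, F θ u ∂ν))
        = fun u => D.indicator (fun _ => Araw) u + Dᶜ.indicator (fun _ => Braw) u := by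
      funext u
      rw [hDval u]
      by_cases hu : u ∈ D
      · rw [if_pos hu, Set.indicator_of_mem hu, Set.indicator_of_notMem (by simpa using hu)]
        ring
      · rw [if_neg hu, Set.indicator_of_notMem hu, Set.indicator_of_mem (by simpa using hu)]
        ring
    rw [hfun, integral_add ((integrable_const Araw).indicator hDmeas)
      ((integrable_const Braw).indicator hDmeas.compl),
      integral_indicator_const _ hDmeas, integral_indicator_const _ hDmeas.compl]
    simp [mul_comm]
    rfl
  -- Step 5: μ D = 1/2
  have hdet_pm : ∀ u : G, ((u : Matrix (Fin 2) (Fin 2) ℝ)).det = 1 ∨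
      ((u : Matrix (Fin 2) (Fin 2) ℝ)).det = -1 := by
    intro u
    rcases decomp u with ⟨α, rfl⟩ | ⟨α, rfl⟩
    · exact Or.inl (det_rot α)
    · exact Or.inr (det_ref α)
  have hDc : Dᶜ = (fun u : G => ref 0 * u) ⁻¹' D := by
    ext u
    have hdet : ((ref 0 * u : G) : Matrix (Fin 2) (Fin 2) ℝ).det
        = -((u : Matrix (Fin 2) (Fin 2) ℝ)).det := by
      rw [coe_mul, Matrix.det_mul, det_ref]; ring
    simp only [Set.mem_compl_iff, Set.mem_preimage, hD, Set.mem_setOf_eq, hdet]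
    rcases hdet_pm u with h | h <;> rw [h] <;> norm_num
  have hmeq : μ Dᶜ = μ D := by
    rw [hDc]
    exact measure_preimage_mul μ (ref 0) D
  have hsum : μ D + μ Dᶜ = 1 := by
    rw [measure_add_measure_compl hDmeas, measure_univ]
  have hDhalf : (μ D).toReal = 1/2 ∧ (μ Dᶜ).toReal = 1/2 := by
    have h1 : (μ D).toReal + (μ Dᶜ).toReal = 1 := by
      rw [← ENNReal.toReal_add (measure_ne_top μ D) (measure_ne_top μ Dᶜ), hsum]
      simp
    have h2 : (μ Dᶜ).toReal = (μ D).toReal := by rw [hmeq]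
    constructor <;> linarith
  -- Step 6: combine
  have Ecomb : (2*π) * I = Araw * (1/2) + Braw * (1/2) := by
    rw [← E1]
    have : (∫ θ, (∫ u, f (rot θ * u) ∂μ) ∂ν) = ∫ θ, (∫ u, F θ u ∂μ) ∂ν := rfl
    rw [this, E2, E5, hDhalf.1, hDhalf.2]
  -- evaluate Araw and Braw
  have hAval : Araw = (-1:ℝ)^b * W (a+d) (b+c) := by
    rw [hAraw]
    have : ∀ θ : ℝ, f (rot θ) = (-1:ℝ)^b * (cos θ ^ (a+d) * sin θ ^ (b+c)) := hrotf
    rw [intervalIntegral.integral_congr (fun θ _ => this θ),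
      intervalIntegral.integral_const_mul]
    rfl
  have hBval : Braw = (-1:ℝ)^d * W (a+d) (b+c) := by
    rw [hBraw]
    have : ∀ θ : ℝ, f (ref θ) = (-1:ℝ)^d * (cos θ ^ (a+d) * sin θ ^ (b+c)) := hreff
    rw [intervalIntegral.integral_congr (fun θ _ => this θ),
      intervalIntegral.integral_const_mul]
    rfl
  have hIval : I = ((-1:ℝ)^b + (-1:ℝ)^d) * W (a+d) (b+c) / (4*π) := by
    have hπ : (2*π : ℝ) ≠ 0 := by positivity
    rw [hAval, hBval] at Ecomb
    field_simp at Ecomb ⊢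
    linarith [Ecomb]
  -- final case analysis
  rw [hIval]
  by_cases hall : Even a ∧ Even b ∧ Even c ∧ Even d
  · obtain ⟨ha, hb, hc, hd⟩ := hall
    obtain ⟨p, hp⟩ : ∃ p, a + d = 2*p := by
      rcases ha with ⟨i, hi⟩; rcases hd with ⟨j, hj⟩; exact ⟨i+j, by omega⟩
    obtain ⟨q, hq⟩ : ∃ q, b + c = 2*q := by
      rcases hb with ⟨i, hi⟩; rcases hc with ⟨j, hj⟩; exact ⟨i+j, by omega⟩
    rw [if_pos ⟨ha, hb, hc, hd⟩, hb.neg_one_pow, hd.neg_one_pow, hp, hq, W_even]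
    have hidx : a + b + c + d + 1 = 2*p + 2*q + 1 := by omega
    rw [hidx, ← hp, ← hq]
    have hne : (df (2*p + 2*q + 1) : ℝ) ≠ 0 := by
      exact_mod_cast (df_pos _).ne'
    have hπ : (π : ℝ) ≠ 0 := Real.pi_ne_zero
    rw [hp, hq]
    field_simp
    ring
  · rw [if_neg hall]
    by_cases hodd : Odd a ∧ Odd b ∧ Odd c ∧ Odd d
    · obtain ⟨ha, hb, hc, hd⟩ := hodd
      obtain ⟨p, hp⟩ : ∃ p, a + d = 2*p := by
        rcases ha with ⟨i, hi⟩; rcases hd with ⟨j, hj⟩; exact ⟨i+j+1, by omega⟩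
      obtain ⟨q, hq⟩ : ∃ q, b + c = 2*q := by
        rcases hb with ⟨i, hi⟩; rcases hc with ⟨j, hj⟩; exact ⟨i+j+1, by omega⟩
      rw [if_pos ⟨ha, hb, hc, hd⟩, hb.neg_one_pow, hd.neg_one_pow, hp, hq, W_even]
      have hidx : a + b + c + d + 1 = 2*p + 2*q + 1 := by omega
      rw [hidx, ← hp, ← hq]
      have hne : (df (2*p + 2*q + 1) : ℝ) ≠ 0 := by
        exact_mod_cast (df_pos _).ne'
      have hπ : (π : ℝ) ≠ 0 := Real.pi_ne_zero
      rw [hp, hq]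
      field_simp
      ring
    · rw [if_neg hodd]
      rw [zero_mul, zero_div]
      -- show the integral term is zero
      rcases Nat.even_or_odd b with hb | hb <;> rcases Nat.even_or_odd d with hd | hd
      · -- b, d even: a or c must be odd
        have hW0 : W (a+d) (b+c) = 0 := by
          rcases Nat.even_or_odd a with ha | ha
          · -- then c is odd (else all even)
            have hc : Odd c := by
              by_contra hc
              exact hall ⟨ha, hb, Nat.not_odd_iff_even.mp hc, hd⟩
            obtain ⟨k, hk⟩ : ∃ k, b + c = 2*k+1 := by
              rcases hb with ⟨i, hi⟩; rcases hc with ⟨j, hj⟩; exact ⟨i+j, by omega⟩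
            rw [hk]; exact W_sin_odd _ _
          · obtain ⟨k, hk⟩ : ∃ k, a + d = 2*k+1 := by
              rcases ha with ⟨i, hi⟩; rcases hd with ⟨j, hj⟩; exact ⟨i+j, by omega⟩
            rw [hk]; exact W_cos_odd _ _
        rw [hW0]; ring
      · rw [hb.neg_one_pow, hd.neg_one_pow]; ring
      · rw [hb.neg_one_pow, hd.neg_one_pow]; ring
      · -- b, d odd: a or c must be even
        have hW0 : W (a+d) (b+c) = 0 := by
          rcases Nat.even_or_odd a with ha | ha
          · obtain ⟨k, hk⟩ : ∃ k, a + d = 2*k+1 := by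
              rcases ha with ⟨i, hi⟩; rcases hd with ⟨j, hj⟩; exact ⟨i+j, by omega⟩
            rw [hk]; exact W_cos_odd _ _
          · have hc : Even c := by
              by_contra hc
              exact hodd ⟨ha, hb, Nat.not_even_iff_odd.mp hc, hd⟩
            obtain ⟨k, hk⟩ : ∃ k, b + c = 2*k+1 := by
              rcases hb with ⟨i, hi⟩; rcases hc with ⟨j, hj⟩; exact ⟨i+j, by omega⟩
            rw [hk]; exact W_sin_odd _ _
        rw [hW0]; ring
end
end

section
/- Let a, b ∈ (2ℕ)^q be vectors with even entries and let n ≥ q + 1, n ≥ 2. Then the basic extension formula holds: Φ_n applied to the two-row array with top row (a_1, …, a_q, 2) and bottom row (b_1, …, b_q, 0) equals (1/(n−q)) · [ (Σ_i a_i + n − 1) Φ_n(a; b) − Σ_{s=1}^q (a_s + 1) Φ_n(a^{(s)}; b) ], where a^{(s)} = (a_1, …, a_{s−1}, a_s + 2, a_{s+1}, …, a_q). -/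
open MeasureTheory Matrix

noncomputable section

-- ===== auxiliary development =====
section Aux

abbrev OG (n : ℕ) := Matrix.orthogonalGroup (Fin n) ℝ

instance OG.topGroup (n : ℕ) : IsTopologicalGroup (OG n) where
  continuous_mul := by
    apply Continuous.subtype_mk
    exact (continuous_subtype_val.comp continuous_fst).matrix_mul
      (continuous_subtype_val.comp continuous_snd)
  continuous_inv :=
    Continuous.subtype_mk (continuous_subtype_val.matrix_conjTranspose) _

instance OG.compact (n : ℕ) : CompactSpace (OG n) := by
  have hK : IsCompact (Set.univ.pi fun _ : Fin n => Set.univ.pi fun _ : Fin n =>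
      Set.Icc (-1 : ℝ) 1) := isCompact_univ_pi fun _ => isCompact_univ_pi fun _ => isCompact_Icc
  have hsub : (Matrix.orthogonalGroup (Fin n) ℝ : Set (Matrix (Fin n) (Fin n) ℝ)) ⊆
      Set.univ.pi fun _ : Fin n => Set.univ.pi fun _ : Fin n => Set.Icc (-1 : ℝ) 1 := by
    intro M hM i _ j _
    have := entry_norm_bound_of_unitary (𝕜 := ℝ) hM i j
    rw [Real.norm_eq_abs, abs_le] at this
    exact this
  have hclosed : IsClosed (Matrix.orthogonalGroup (Fin n) ℝ : Set (Matrix (Fin n) (Fin n) ℝ)) := by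
    have : (Matrix.orthogonalGroup (Fin n) ℝ : Set (Matrix (Fin n) (Fin n) ℝ)) =
        ((fun M : Matrix (Fin n) (Fin n) ℝ => star M * M) ⁻¹' {1}) ∩
        ((fun M : Matrix (Fin n) (Fin n) ℝ => M * star M) ⁻¹' {1}) := by
      ext M
      simp [Unitary.mem_iff, Set.mem_preimage]
    rw [this]
    exact ((isClosed_singleton).preimage
        (continuous_id.matrix_conjTranspose.matrix_mul continuous_id)).inter
      ((isClosed_singleton).preimage
        (continuous_id.matrix_mul continuous_id.matrix_conjTranspose))
  exact isCompact_iff_compactSpace.mp (hK.of_isClosed_subset hclosed hsub)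

set_option synthInstance.maxHeartbeats 1000000 in
instance OG.lcs (n : ℕ) : LocallyCompactSpace (OG n) :=
  WeaklyLocallyCompactSpace.locallyCompactSpace

variable {n : ℕ}

lemma OG.map_mul_right_eq (μ : Measure (OG n)) [μ.IsHaarMeasure] [IsProbabilityMeasure μ]
    (g : OG n) : Measure.map (· * g) μ = μ := by
  have hc : Continuous (· * g : OG n → OG n) := continuous_mul_right g
  have hm : Measurable (· * g : OG n → OG n) := hc.measurable
  have h1 : IsProbabilityMeasure (Measure.map (· * g) μ) :=
    Measure.isProbabilityMeasure_map hm.aemeasurable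
  have h2 : (Measure.map (· * g) μ).IsMulLeftInvariant := by
    constructor
    intro h
    have hmh : Measurable (h * · : OG n → OG n) := (continuous_mul_left h).measurable
    rw [Measure.map_map hmh hm]
    have : ((h * ·) ∘ (· * g) : OG n → OG n) = ((· * g) ∘ (h * ·)) := by
      funext x; simp [Function.comp, mul_assoc]
    rw [this, ← Measure.map_map hm hmh, map_mul_left_eq_self]
  have h3 : (Measure.map (· * g) μ).IsOpenPosMeasure := by
    constructor
    intro U hU hUne
    rw [Measure.map_apply hm hU.measurableSet]
    apply (hU.preimage hc).measure_ne_zero μ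
    obtain ⟨x, hx⟩ := hUne
    exact ⟨x * g⁻¹, by simpa using hx⟩
  have h4 : (Measure.map (· * g) μ).IsHaarMeasure := by constructor
  exact Measure.isHaarMeasure_eq_of_isProbabilityMeasure _ μ

lemma OG.integral_mul_right (μ : Measure (OG n)) [μ.IsHaarMeasure] [IsProbabilityMeasure μ]
    (g : OG n) (f : OG n → ℝ) : ∫ u, f (u * g) ∂μ = ∫ u, f u ∂μ := by
  calc ∫ u, f (u * g) ∂μ
      = ∫ u, f ((Homeomorph.mulRight g).toMeasurableEquiv u) ∂μ := rfl
    _ = ∫ u, f u ∂(Measure.map (Homeomorph.mulRight g).toMeasurableEquiv μ) :=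
        (MeasureTheory.integral_map_equiv _ _).symm
    _ = ∫ u, f u ∂μ := by
        rw [show ((Homeomorph.mulRight g).toMeasurableEquiv : OG n → OG n) = (· * g) from rfl,
          OG.map_mul_right_eq μ g]

end Aux
-- ===== end auxiliary =====

section Aux2
variable {n : ℕ}

lemma entry_eq (u : OG n) {i : ℕ} (hi : i < n) (j : Fin n) :
    entry u i (j : ℕ) = (u : Matrix (Fin n) (Fin n) ℝ) ⟨i, hi⟩ j := by
  rw [entry, dif_pos (⟨hi, j.isLt⟩ : i < n ∧ (j : ℕ) < n)]

lemma abs_entry_le_one (u : OG n) (i j : ℕ) : |entry u i j| ≤ 1 := by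
  unfold entry
  split
  · have := entry_norm_bound_of_unitary (𝕜 := ℝ) u.2 ⟨i, by omega⟩ ⟨j, by omega⟩
    rwa [Real.norm_eq_abs] at this
  · simp

lemma continuous_entry (i j : ℕ) : Continuous fun u : OG n => entry u i j := by
  unfold entry
  by_cases h : i < n ∧ j < n
  · simp only [dif_pos h]
    exact continuous_subtype_val.matrix_elem _ _
  · simp only [dif_neg h]
    exact continuous_const

lemma measurable_entry (i j : ℕ) : Measurable fun u : OG n => entry u i j :=
  (continuous_entry i j).measurable

lemma row_sq_sum (u : OG n) {i : ℕ} (hi : i < n) :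
    ∑ k : Fin n, entry u i (k : ℕ) ^ 2 = 1 := by
  have h := (Unitary.mem_iff.mp u.2).2
  have h2 := congrArg (fun M => M ⟨i, hi⟩ ⟨i, hi⟩) h
  simp only [Matrix.mul_apply, Matrix.one_apply_eq] at h2
  calc ∑ k : Fin n, entry u i (k : ℕ) ^ 2
      = ∑ k : Fin n, (u : Matrix (Fin n) (Fin n) ℝ) ⟨i, hi⟩ k *
          (star (u : Matrix (Fin n) (Fin n) ℝ)) k ⟨i, hi⟩ := by
        refine Finset.sum_congr rfl fun k _ => ?_
        rw [entry_eq u hi k]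
        simp [Matrix.conjTranspose_apply, sq]
    _ = 1 := h2

end Aux2

section Aux3
variable {n : ℕ}

/-- The permutation matrix of `σ`, as an element of the orthogonal group. -/
def permOG (σ : Equiv.Perm (Fin n)) : OG n :=
  ⟨Matrix.of fun t j => if t = σ j then (1 : ℝ) else 0, by
    rw [Unitary.mem_iff]
    constructor
    · ext j j'
      simp only [Matrix.mul_apply, Matrix.conjTranspose_apply, Matrix.of_apply, star_trivial,
        ite_mul, one_mul, zero_mul, Finset.sum_ite_eq, Finset.mem_univ, if_true]
      simp only [Matrix.one_apply, σ.injective.eq_iff]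
      by_cases h : j = j'
      · simp [h]
      · simp [h, Ne.symm h]
    · ext t t'
      simp only [Matrix.mul_apply, Matrix.conjTranspose_apply, Matrix.of_apply, star_trivial]
      rw [Finset.sum_eq_single (σ.symm t')]
      · simp only [Equiv.apply_symm_apply, if_pos rfl, mul_one, Matrix.one_apply]
        by_cases h : t = t'
        · simp [h]
        · simp [h, fun ht : t = σ (σ.symm t') => h (by simpa using ht)]
      · intro c _ hc
        have h2 : ¬ t' = σ c := fun h => hc (by simp [h])
        simp [h2]
      · intro h
        exact absurd (Finset.mem_univ _) h⟩

lemma entry_mul_perm (u : OG n) (σ : Equiv.Perm (Fin n)) (i j : ℕ) (hi : i < n) (hj : j < n) :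
    entry (u * permOG σ) i j = entry u i ((σ ⟨j, hj⟩ : Fin n) : ℕ) := by
  have h1 : entry (u * permOG σ) i j
      = ((u * permOG σ : OG n) : Matrix (Fin n) (Fin n) ℝ) ⟨i, hi⟩ ⟨j, hj⟩ :=
    entry_eq (u * permOG σ) hi ⟨j, hj⟩
  have h2 : entry u i ((σ ⟨j, hj⟩ : Fin n) : ℕ)
      = (u : Matrix (Fin n) (Fin n) ℝ) ⟨i, hi⟩ (σ ⟨j, hj⟩) := by
    rw [entry_eq u hi (σ ⟨j, hj⟩)]
  rw [h1, h2]
  show ((u : Matrix (Fin n) (Fin n) ℝ) * (permOG σ : Matrix (Fin n) (Fin n) ℝ)) _ _ = _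
  simp [permOG, Matrix.mul_apply, mul_ite, mul_one, mul_zero]

end Aux3

section Aux4
set_option synthInstance.maxHeartbeats 1000000
variable {n : ℕ}

lemma integrable_bdd (μ : Measure (OG n)) [IsProbabilityMeasure μ] (f : OG n → ℝ)
    (hm : Measurable f) (hb : ∀ u, |f u| ≤ 1) : Integrable f μ :=
  Integrable.mono' (integrable_const 1) hm.aestronglyMeasurable
    (ae_of_all μ fun u => by simpa using hb u)

lemma measurable_g {q : ℕ} (a b : Fin q → ℕ) :
    Measurable fun u : OG n => ∏ j : Fin q, entry u 0 (j : ℕ) ^ a j * entry u 1 (j : ℕ) ^ b j :=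
  Finset.measurable_prod _ fun j _ =>
    ((measurable_entry 0 (j : ℕ)).pow_const _).mul ((measurable_entry 1 (j : ℕ)).pow_const _)

lemma abs_g_le_one {q : ℕ} (a b : Fin q → ℕ) (u : OG n) :
    |∏ j : Fin q, entry u 0 (j : ℕ) ^ a j * entry u 1 (j : ℕ) ^ b j| ≤ 1 := by
  rw [Finset.abs_prod]
  refine Finset.prod_le_one (fun j _ => abs_nonneg _) fun j _ => ?_
  rw [abs_mul, abs_pow, abs_pow]
  exact mul_le_one₀ (pow_le_one₀ (abs_nonneg _) (abs_entry_le_one u 0 _))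
    (pow_nonneg (abs_nonneg _) _) (pow_le_one₀ (abs_nonneg _) (abs_entry_le_one u 1 _))

lemma key_integral {q : ℕ} (a b : Fin q → ℕ) (hq : q + 1 ≤ n)
    (μ : Measure (OG n)) [μ.IsHaarMeasure] [IsProbabilityMeasure μ] :
    twoRowI n μ a b = (∑ s : Fin q, twoRowI n μ (Function.update a s (a s + 2)) b)
      + ((n : ℝ) - (q : ℝ)) * twoRowI n μ (Fin.snoc a 2) (Fin.snoc b 0) := by
  set g : OG n → ℝ := fun u => ∏ j : Fin q, entry u 0 (j : ℕ) ^ a j * entry u 1 (j : ℕ) ^ b j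
    with hg
  set c : ℕ → ℝ := fun k => ∫ u, entry u 0 k ^ 2 * g u ∂μ with hc
  have hgm : Measurable g := measurable_g a b
  have hgb : ∀ u, |g u| ≤ 1 := abs_g_le_one a b
  have hint : ∀ k : ℕ, Integrable (fun u => entry u 0 k ^ 2 * g u) μ := by
    intro k
    refine integrable_bdd μ _ (((measurable_entry 0 k).pow_const 2).mul hgm) fun u => ?_
    rw [abs_mul, abs_pow]
    exact mul_le_one₀ (pow_le_one₀ (abs_nonneg _) (abs_entry_le_one u 0 k))
      (abs_nonneg _) (hgb u)
  -- Step 1 : total sum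
  have step1 : twoRowI n μ a b = ∑ k : Fin n, c (k : ℕ) := by
    have : ∀ u : OG n, g u = ∑ k : Fin n, entry u 0 (k : ℕ) ^ 2 * g u := by
      intro u
      rw [← Finset.sum_mul, row_sq_sum u (by omega : (0:ℕ) < n), one_mul]
    calc twoRowI n μ a b = ∫ u, g u ∂μ := rfl
      _ = ∫ u, ∑ k : Fin n, entry u 0 (k : ℕ) ^ 2 * g u ∂μ := by
          exact integral_congr_ae (ae_of_all μ this)
      _ = ∑ k : Fin n, c (k : ℕ) :=
          integral_finset_sum _ fun k _ => hint (k : ℕ)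
  -- Step 2 : small columns
  have step2 : ∀ s : Fin q, c (s : ℕ) = twoRowI n μ (Function.update a s (a s + 2)) b := by
    intro s
    show (∫ u, entry u 0 (s : ℕ) ^ 2 * g u ∂μ)
        = ∫ u, ∏ j : Fin q, entry u 0 (j : ℕ) ^ (Function.update a s (a s + 2) j)
            * entry u 1 (j : ℕ) ^ b j ∂μ
    refine integral_congr_ae (ae_of_all μ fun u => ?_)
    have key : ∀ f : Fin q → ℕ,
        ∏ j : Fin q, entry u 0 (j : ℕ) ^ f j * entry u 1 (j : ℕ) ^ b j
          = (entry u 0 (s : ℕ) ^ f s * entry u 1 (s : ℕ) ^ b s) *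
              ∏ j ∈ Finset.univ.erase s, entry u 0 (j : ℕ) ^ f j * entry u 1 (j : ℕ) ^ b j :=
      fun f => (Finset.mul_prod_erase _ _ (Finset.mem_univ s)).symm
    have h3 : ∏ j ∈ Finset.univ.erase s,
          entry u 0 (j : ℕ) ^ (Function.update a s (a s + 2) j) * entry u 1 (j : ℕ) ^ b j
        = ∏ j ∈ Finset.univ.erase s, entry u 0 (j : ℕ) ^ a j * entry u 1 (j : ℕ) ^ b j :=
      Finset.prod_congr rfl fun j hj => by
        rw [Function.update_of_ne (Finset.ne_of_mem_erase hj)]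
    show entry u 0 (s : ℕ) ^ 2 * g u = _
    simp only [hg]
    rw [key a, key (Function.update a s (a s + 2)), h3, Function.update_self, pow_add]
    ring
  -- Step 3 : invariance for large columns
  have step3 : ∀ k : ℕ, q ≤ k → k < n → c k = c q := by
    intro k hqk hkn
    have hqn : q < n := by omega
    set σ : Equiv.Perm (Fin n) := Equiv.swap ⟨q, hqn⟩ ⟨k, hkn⟩ with hσ
    have := OG.integral_mul_right μ (permOG σ) (fun u => entry u 0 q ^ 2 * g u)
    show (∫ u, entry u 0 k ^ 2 * g u ∂μ) = ∫ u, entry u 0 q ^ 2 * g u ∂μ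
    rw [← this]
    refine integral_congr_ae (ae_of_all μ fun u => ?_)
    have e1 : entry (u * permOG σ) 0 q = entry u 0 k := by
      rw [entry_mul_perm u σ 0 q (by omega) hqn, hσ, Equiv.swap_apply_left]
    have e2 : g (u * permOG σ) = g u := by
      rw [hg]
      refine Finset.prod_congr rfl fun j _ => ?_
      have hj : (j : ℕ) < n := by omega
      have hfix : σ ⟨(j : ℕ), hj⟩ = ⟨(j : ℕ), hj⟩ := by
        rw [hσ]
        refine Equiv.swap_apply_of_ne_of_ne ?_ ?_
        · exact fun h => by simp only [Fin.mk.injEq] at h; omega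
        · exact fun h => by simp only [Fin.mk.injEq] at h; omega
      rw [entry_mul_perm u σ 0 (j : ℕ) (by omega) hj,
        entry_mul_perm u σ 1 (j : ℕ) (by omega) hj, hfix]
    show entry u 0 k ^ 2 * g u = entry (u * permOG σ) 0 q ^ 2 * g (u * permOG σ)
    rw [e1, e2]
  -- Step 4 : snoc value
  have step4 : twoRowI n μ (Fin.snoc a 2) (Fin.snoc b 0) = c q := by
    have hfun : (fun u : OG n => ∏ j : Fin (q + 1),
          entry u 0 (j : ℕ) ^ (Fin.snoc a 2 j) * entry u 1 (j : ℕ) ^ (Fin.snoc b 0 j))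
        = fun u => entry u 0 q ^ 2 * g u := by
      funext u
      rw [Fin.prod_univ_castSucc]
      simp only [Fin.snoc_castSucc, Fin.snoc_last, Fin.coe_castSucc, Fin.val_last, pow_zero,
        mul_one, hg]
      ring
    show (∫ u, ∏ j : Fin (q + 1),
        entry u 0 (j : ℕ) ^ (Fin.snoc a 2 j) * entry u 1 (j : ℕ) ^ (Fin.snoc b 0 j) ∂μ)
      = ∫ u, entry u 0 q ^ 2 * g u ∂μ
    rw [hfun]
  -- assemble
  have hsplit : ∑ k : Fin n, c (k : ℕ)
      = (∑ s : Fin q, c (s : ℕ)) + ((n : ℝ) - (q : ℝ)) * c q := by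
    rw [Fin.sum_univ_eq_sum_range, Finset.range_eq_Ico,
      ← Finset.sum_Ico_consecutive c (Nat.zero_le q) (by omega : q ≤ n)]
    have hconst : ∑ k ∈ Finset.Ico q n, c k = ((n : ℝ) - (q : ℝ)) * c q := by
      rw [Finset.sum_congr rfl fun k hk => step3 k (Finset.mem_Ico.mp hk).1 (Finset.mem_Ico.mp hk).2]
      rw [Finset.sum_const, Nat.card_Ico, nsmul_eq_mul]
      have : ((n - q : ℕ) : ℝ) = (n : ℝ) - (q : ℝ) := by
        have : q ≤ n := by omega
        push_cast [this]
        ring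
      rw [this]
    rw [hconst, ← Finset.range_eq_Ico, ← Fin.sum_univ_eq_sum_range]
  rw [step1, hsplit, step4]
  congr 1
  exact Finset.sum_congr rfl fun s _ => step2 s

end Aux4

section Aux5

lemma df_pos (m : ℕ) : 0 < df m := by
  unfold df
  induction m - 1 using Nat.strong_induction_on with
  | _ k ih =>
    match k with
    | 0 => simp [Nat.doubleFactorial]
    | 1 => simp [Nat.doubleFactorial]
    | (k+2) =>
      rw [Nat.doubleFactorial_add_two]
      exact Nat.mul_pos (by omega) (ih k (by omega))

lemma df_add_two (m : ℕ) : df (m + 2) = (m + 1) * df m := by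
  cases m with
  | zero => rfl
  | succ k => exact Nat.doubleFactorial_add_two k

end Aux5


/-- the basic extension formula. -/
theorem statement7 (q n : ℕ) (a b : Fin q → ℕ)
    (ha : ∀ i, Even (a i)) (hb : ∀ i, Even (b i))
    (hn : 2 ≤ n) (hq : q + 1 ≤ n)
    (μ : Measure (Matrix.orthogonalGroup (Fin n) ℝ))
    [μ.IsHaarMeasure] [IsProbabilityMeasure μ] :
    Phi n μ (Fin.snoc a 2) (Fin.snoc b 0) =
      1 / ((n : ℝ) - (q : ℝ)) *
        ((((∑ i, a i : ℕ) : ℝ) + (n : ℝ) - 1) * Phi n μ a b -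
          ∑ s : Fin q, ((a s : ℝ) + 1) * Phi n μ (Function.update a s (a s + 2)) b) := by
  classical
  set A := ∑ i, a i with hA
  set B := ∑ i, b i with hB
  set dA := (df (A + n - 2) : ℝ) with hdA
  set dB := (df (B + n - 2) : ℝ) with hdB
  set dn := (df (n - 2) : ℝ) with hdn
  set Pa := ∏ i, (df (a i) : ℝ) with hPa
  set Pb := ∏ i, (df (b i) : ℝ) with hPb
  have hdn0 : dn ≠ 0 := by
    rw [hdn]; exact_mod_cast (df_pos (n - 2)).ne'
  have hPa0 : Pa ≠ 0 := by
    rw [hPa]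
    exact Finset.prod_ne_zero_iff.mpr fun i _ => by exact_mod_cast (df_pos (a i)).ne'
  have hPb0 : Pb ≠ 0 := by
    rw [hPb]
    exact Finset.prod_ne_zero_iff.mpr fun i _ => by exact_mod_cast (df_pos (b i)).ne'
  set CC : ℝ := dA * dB / (dn ^ 2 * Pa * Pb) with hCC
  set K : ℝ := ((A : ℝ) + (n : ℝ) - 1) * CC with hK
  -- numeric facts
  have hsnocA : (∑ i : Fin (q + 1), (Fin.snoc a 2 : Fin (q + 1) → ℕ) i) = A + 2 := by
    rw [Fin.sum_univ_castSucc]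
    simp [hA]
  have hsnocB : (∑ i : Fin (q + 1), (Fin.snoc b 0 : Fin (q + 1) → ℕ) i) = B := by
    rw [Fin.sum_univ_castSucc]
    simp [hB]
  have hprodA : (∏ i : Fin (q + 1), (df ((Fin.snoc a 2 : Fin (q + 1) → ℕ) i) : ℝ)) = Pa := by
    rw [Fin.prod_univ_castSucc, hPa]
    simp [df]
  have hprodB : (∏ i : Fin (q + 1), (df ((Fin.snoc b 0 : Fin (q + 1) → ℕ) i) : ℝ)) = Pb := by
    rw [Fin.prod_univ_castSucc, hPb]
    simp [df]
  have hdfA : (df (A + 2 + n - 2) : ℝ) = ((A : ℝ) + (n : ℝ) - 1) * dA := by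
    have h1 : A + 2 + n - 2 = (A + n - 2) + 2 := by omega
    rw [h1, df_add_two, hdA]
    have h2 : A + n - 2 + 1 = A + n - 1 := by omega
    push_cast [h2]
    rw [Nat.cast_sub (by omega : 1 ≤ A + n)]
    push_cast
    ring
  have hsum_upd : ∀ s : Fin q, (∑ i, Function.update a s (a s + 2) i) = A + 2 := by
    intro s
    rw [Finset.sum_update_of_mem (Finset.mem_univ s)]
    have h := Finset.add_sum_erase Finset.univ a (Finset.mem_univ s)
    rw [Finset.erase_eq] at h
    omega
  have hprod_upd : ∀ s : Fin q,
      (∏ i, (df (Function.update a s (a s + 2) i) : ℝ)) = ((a s : ℝ) + 1) * Pa := by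
    intro s
    rw [← Finset.mul_prod_erase Finset.univ _ (Finset.mem_univ s)]
    have herase : ∏ i ∈ Finset.univ.erase s, (df (Function.update a s (a s + 2) i) : ℝ)
        = ∏ i ∈ Finset.univ.erase s, (df (a i) : ℝ) :=
      Finset.prod_congr rfl fun i hi => by
        rw [Function.update_of_ne (Finset.ne_of_mem_erase hi)]
    rw [herase, Function.update_self, df_add_two, hPa,
      ← Finset.mul_prod_erase Finset.univ (fun i => (df (a i) : ℝ)) (Finset.mem_univ s)]
    push_cast
    ring
  -- Phi expressions
  have EL : Phi n μ (Fin.snoc a 2) (Fin.snoc b 0)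
      = K * twoRowI n μ (Fin.snoc a 2) (Fin.snoc b 0) := by
    rw [Phi, hsnocA, hsnocB, hprodA, hprodB, hdfA, hK, hCC, ← hdB]
    ring
  have E0 : Phi n μ a b = CC * twoRowI n μ a b := by
    rw [Phi, hCC, ← hA, ← hB, ← hdA, ← hdB, ← hPa, ← hPb]
  have Es : ∀ s : Fin q, ((a s : ℝ) + 1) * Phi n μ (Function.update a s (a s + 2)) b
      = K * twoRowI n μ (Function.update a s (a s + 2)) b := by
    intro s
    have has0 : (a s : ℝ) + 1 ≠ 0 := by positivity
    rw [Phi, hsum_upd s, hprod_upd s, hdfA, ← hB, ← hdB, hK, hCC]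
    simp only [← hdn, ← hPb]
    field_simp
  have hkey := key_integral a b hq μ
  have hnq : (n : ℝ) - (q : ℝ) ≠ 0 := by
    have : (q : ℝ) < (n : ℝ) := by exact_mod_cast (by omega : q < n)
    exact sub_ne_zero.mpr this.ne'
  rw [EL, E0]
  have hsum : ∑ s : Fin q, ((a s : ℝ) + 1) * Phi n μ (Function.update a s (a s + 2)) b
      = K * ∑ s : Fin q, twoRowI n μ (Function.update a s (a s + 2)) b := by
    rw [Finset.mul_sum]
    exact Finset.sum_congr rfl fun s _ => Es s
  rw [hsum, hkey, hK]
  field_simp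
  ring
end
end
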